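/- Let R be a (possibly noncommutative) ring, let g be a unit of R with inverse h, and let T : Fin 3 → R. Define 3×3 matrices over R by D_{αβ} = δ̄_{αβ}·h, K_{αγ} = δ̄_{αγ}·T_γ·g, and L_{γβ} = g·T_γ·δ̄_{γβ}, where δ̄_{αβ} = 1 − δ_{αβ}. If the matrix (1 − K) is invertible and U := (1 − K)⁻¹·D, then U also satisfies U = D + U·L. (That is, the solution of the first form of the covariant AGS equations, U_{αβ} = δ̄_{αβ}h + Σ_γ δ̄_{αγ}T_γ g U_{γβ}, automatically satisfies the second, adjoint form U_{αβ} = δ̄_{αβ}h + Σ_γ U_{αγ} g T_γ δ̄_{γβ}.) -/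
import Mathlib


/-- The solution `U = (1 - K)⁻¹ D` of the first form of the covariant AGS
equations automatically satisfies the second, adjoint form `U = D + U L`. -/
theorem ags_adjoint_form {R : Type*} [Ring R] (g h : R)
    (hgh : g * h = 1) (hhg : h * g = 1)
    (T : Fin 3 → R)
    (D K L : Matrix (Fin 3) (Fin 3) R)
    (hD : ∀ α β, D α β = (if α = β then (0 : R) else 1) * h)
    (hK : ∀ α γ, K α γ = (if α = γ then (0 : R) else 1) * T γ * g)
    (hL : ∀ γ β, L γ β = g * T γ * (if γ = β then (0 : R) else 1))
    (hinv : IsUnit (1 - K))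
    (U : Matrix (Fin 3) (Fin 3) R)
    (hU : U = Ring.inverse (1 - K) * D) :
    U = D + U * L := by
  have hKD : K * D = D * L := by
    ext α β
    simp only [Matrix.mul_apply, hK, hD, hL]
    refine Finset.sum_congr rfl fun γ _ => ?_
    by_cases h1 : α = γ <;> by_cases h2 : γ = β <;>
      simp only [h1, h2, if_true, if_pos rfl, if_neg, ite_true, ite_false,
        one_mul, mul_one, zero_mul, mul_zero, not_false_iff]
    · rw [mul_assoc, hgh, mul_one, ← mul_assoc, hhg, one_mul]
  have h1 : (1 - K) * U = D := by
    rw [hU, ← mul_assoc, Ring.mul_inverse_cancel _ hinv, one_mul]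
  have h2 : (1 - K) * (D + U * L) = D := by
    rw [mul_add, ← mul_assoc, h1, sub_mul, one_mul, hKD]
    abel
  calc U = Ring.inverse (1 - K) * ((1 - K) * (D + U * L)) := by rw [h2, hU]
    _ = D + U * L := by rw [← mul_assoc, Ring.inverse_mul_cancel _ hinv, one_mul]
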